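/- arXiv:1610.01051 — 2 statements merged into one kernel-verified Lean document; each statement's English description precedes it below -/
import Mathlib

section
/- Let (U_k^(1), V_k^(1), E_k) and (U_k^(2), V_k^(2), E_k), k=1,…,p, be two proper weak regular multisplittings of a nonnegative semimonotone matrix A ∈ ℝ^{m×n} with R(E_k) ⊆ R(Aᵀ) for each k. If [U_k^(1)]† ≥ [U_k^(2)]† for each k, then ρ(H₁) ≤ ρ(H₂) < 1, where H_i = Σ_{k=1}^p E_k [U_k^(i)]† V_k^(i). -/
open Matrix Polynomial

/-- `X` is the Moore-Penrose inverse of `A`. -/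
def IsMP {m n : ℕ} (A : Matrix (Fin m) (Fin n) ℝ) (X : Matrix (Fin n) (Fin m) ℝ) : Prop :=
  A * X * A = A ∧ X * A * X = X ∧ (A * X)ᵀ = A * X ∧ (X * A)ᵀ = X * A

/-- `A = U - V` is a proper splitting: `R(U)=R(A)` and `N(U)=N(A)`. -/
def ProperSplitting {m n : ℕ} (A U V : Matrix (Fin m) (Fin n) ℝ) : Prop :=
  A = U - V ∧ LinearMap.range U.mulVecLin = LinearMap.range A.mulVecLin ∧
    LinearMap.ker U.mulVecLin = LinearMap.ker A.mulVecLin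

/-- `μ : ℂ` is an eigenvalue of the real matrix `M`. -/
def IsEigen {n : ℕ} (M : Matrix (Fin n) (Fin n) ℝ) (μ : ℂ) : Prop :=
  ((M.map (algebraMap ℝ ℂ)).charpoly).IsRoot μ

/-- The spectral radius of a real square matrix. -/
noncomputable def specRad {n : ℕ} (M : Matrix (Fin n) (Fin n) ℝ) : ℝ :=
  sSup {r : ℝ | ∃ μ : ℂ, IsEigen M μ ∧ r = ‖μ‖}

/-- Entrywise nonnegativity. -/
def EntryNonneg {m n : ℕ} (A : Matrix (Fin m) (Fin n) ℝ) : Prop := ∀ i j, 0 ≤ A i j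

/-- Entrywise order. -/
def EntryLE {m n : ℕ} (A B : Matrix (Fin m) (Fin n) ℝ) : Prop := ∀ i j, A i j ≤ B i j

/-- Entrywise strict order. -/
def EntryLT {m n : ℕ} (A B : Matrix (Fin m) (Fin n) ℝ) : Prop := ∀ i j, A i j < B i j

/-! ### Auxiliary lemmas -/

/-- Two matrices agreeing on all `mulVec` are equal. -/
lemma matrix_eq_of_mulVec {m n : ℕ} {M N : Matrix (Fin m) (Fin n) ℝ}
    (h : ∀ x, M *ᵥ x = N *ᵥ x) : M = N := by
  ext i j
  have := congrFun (h (Pi.single j 1)) i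
  simpa using this

/-- If `W` (as `mulVec`) is injective and `W * Wd * W = W`, then `Wd * W = 1`. -/
lemma mp_left_inv {m n : ℕ} {W : Matrix (Fin m) (Fin n) ℝ} {Wd : Matrix (Fin n) (Fin m) ℝ}
    (hW : W * Wd * W = W) (hinj : ∀ x, W *ᵥ x = 0 → x = 0) : Wd * W = 1 := by
  apply matrix_eq_of_mulVec
  intro x
  have key : W *ᵥ ((Wd * W) *ᵥ x - x) = 0 := by
    have h1 : W *ᵥ ((Wd * W) *ᵥ x) = (W * (Wd * W)) *ᵥ x := Matrix.mulVec_mulVec _ _ _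
    have h2 : W * (Wd * W) = W := by rw [← Matrix.mul_assoc]; exact hW
    rw [Matrix.mulVec_sub, h1, h2, sub_self]
  rw [Matrix.one_mulVec]
  exact sub_eq_zero.mp (hinj _ key)

lemma sum_mulVec' {n q : ℕ} (E : Fin q → Matrix (Fin n) (Fin n) ℝ) (x : Fin n → ℝ) :
    (∑ k, E k) *ᵥ x = ∑ k, E k *ᵥ x := by
  ext i
  simp only [Matrix.mulVec, dotProduct, Matrix.sum_apply, Finset.sum_apply,
    Finset.sum_mul]
  exact Finset.sum_comm

/-- Absorption: if the range of `W` (columnwise) lies in that of `U`, then `U*Ud*W = W`. -/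
lemma proj_absorb {m n : ℕ} {U W : Matrix (Fin m) (Fin n) ℝ} {Ud : Matrix (Fin n) (Fin m) ℝ}
    (hU : U * Ud * U = U)
    (hr : ∀ x, ∃ y, U *ᵥ y = W *ᵥ x) : U * Ud * W = W := by
  apply matrix_eq_of_mulVec
  intro x
  obtain ⟨y, hy⟩ := hr x
  calc (U * Ud * W) *ᵥ x = (U * Ud) *ᵥ (W *ᵥ x) := (Matrix.mulVec_mulVec x (U * Ud) W).symm
    _ = (U * Ud) *ᵥ (U *ᵥ y) := by rw [hy]
    _ = (U * Ud * U) *ᵥ y := Matrix.mulVec_mulVec y (U * Ud) U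
    _ = U *ᵥ y := by rw [hU]
    _ = W *ᵥ x := hy

/-- Equal ranges give equal orthogonal projections `U Ud = A Ad`. -/
lemma proj_eq {m n : ℕ} {A U : Matrix (Fin m) (Fin n) ℝ} {Ad Ud : Matrix (Fin n) (Fin m) ℝ}
    (hA : IsMP A Ad) (hU : IsMP U Ud)
    (hrange : LinearMap.range U.mulVecLin = LinearMap.range A.mulVecLin) :
    U * Ud = A * Ad := by
  have hr1 : ∀ x, ∃ y, U *ᵥ y = A *ᵥ x := by
    intro x
    have hx : A *ᵥ x ∈ LinearMap.range U.mulVecLin := by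
      rw [hrange]; exact ⟨x, by simp [Matrix.mulVecLin_apply]⟩
    obtain ⟨y, hy⟩ := hx
    exact ⟨y, by simpa [Matrix.mulVecLin_apply] using hy⟩
  have hr2 : ∀ x, ∃ y, A *ᵥ y = U *ᵥ x := by
    intro x
    have hx : U *ᵥ x ∈ LinearMap.range A.mulVecLin := by
      rw [← hrange]; exact ⟨x, by simp [Matrix.mulVecLin_apply]⟩
    obtain ⟨y, hy⟩ := hx
    exact ⟨y, by simpa [Matrix.mulVecLin_apply] using hy⟩
  have h1 : U * Ud * A = A := proj_absorb hU.1 hr1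
  have h2 : A * Ad * U = U := proj_absorb hA.1 hr2
  have e1 : (U * Ud) * (A * Ad) = A * Ad := by rw [← Matrix.mul_assoc, h1]
  have e2 : (A * Ad) * (U * Ud) = U * Ud := by rw [← Matrix.mul_assoc, h2]
  calc U * Ud = (A * Ad) * (U * Ud) := e2.symm
    _ = (A * Ad)ᵀ * (U * Ud)ᵀ := by rw [hA.2.2.1, hU.2.2.1]
    _ = ((U * Ud) * (A * Ad))ᵀ := (Matrix.transpose_mul _ _).symm
    _ = (A * Ad)ᵀ := by rw [e1]
    _ = A * Ad := hA.2.2.1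

/-- The key algebraic identity `B * A = 1 - H` for multisplittings. -/
lemma multBA {m n q : ℕ} {A : Matrix (Fin m) (Fin n) ℝ} {U V : Fin q → Matrix (Fin m) (Fin n) ℝ}
    {Ud : Fin q → Matrix (Fin n) (Fin m) ℝ} {E : Fin q → Matrix (Fin n) (Fin n) ℝ}
    (hsplit : ∀ k, A = U k - V k) (hinv : ∀ k, Ud k * U k = 1) (hEsum : ∑ k, E k = 1) :
    (∑ k, E k * Ud k) * A = 1 - ∑ k, E k * Ud k * V k := by
  rw [Matrix.sum_mul]
  have key : ∀ k ∈ Finset.univ, (E k * Ud k) * A = E k - E k * Ud k * V k := by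
    intro k _
    have hUA : Ud k * A = 1 - Ud k * V k := by
      rw [hsplit k, Matrix.mul_sub, hinv k]
    calc (E k * Ud k) * A = E k * (Ud k * A) := Matrix.mul_assoc _ _ _
      _ = E k * (1 - Ud k * V k) := by rw [hUA]
      _ = E k - E k * Ud k * V k := by rw [Matrix.mul_sub, Matrix.mul_one, ← Matrix.mul_assoc]
  rw [Finset.sum_congr rfl key, Finset.sum_sub_distrib, hEsum]

lemma mul_entry_nonneg {a b c : ℕ} {M : Matrix (Fin a) (Fin b) ℝ} {N : Matrix (Fin b) (Fin c) ℝ}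
    (hM : ∀ i j, 0 ≤ M i j) (hN : ∀ i j, 0 ≤ N i j) : ∀ i j, 0 ≤ (M * N) i j := by
  intro i j
  rw [Matrix.mul_apply]
  exact Finset.sum_nonneg fun l _ => mul_nonneg (hM i l) (hN l j)

/-- Eigenvalues of an (off-)diagonal-zero real matrix are its diagonal entries. -/
lemma isEigen_of_diag {n : ℕ} {M : Matrix (Fin n) (Fin n) ℝ}
    (hdiag : ∀ i j, i ≠ j → M i j = 0) (μ : ℂ) :
    IsEigen M μ ↔ ∃ i, μ = (M i i : ℂ) := by
  have hM : M.map (algebraMap ℝ ℂ) = Matrix.diagonal (fun i => (M i i : ℂ)) := by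
    ext i j
    by_cases h : i = j
    · subst h
      simp [Matrix.map_apply]
    · simp [Matrix.map_apply, hdiag i j h, Matrix.diagonal_apply_ne _ h]
  have hcm : charmatrix (Matrix.diagonal fun i => (M i i : ℂ)) =
      Matrix.diagonal (fun i => (Polynomial.X - Polynomial.C ((M i i : ℂ)))) := by
    ext i j
    by_cases h : i = j
    · subst h
      rw [charmatrix_apply_eq, Matrix.diagonal_apply_eq, Matrix.diagonal_apply_eq]
    · rw [charmatrix_apply_ne _ _ _ h, Matrix.diagonal_apply_ne _ h,
        Matrix.diagonal_apply_ne _ h, map_zero, neg_zero]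
  have hchar : (M.map (algebraMap ℝ ℂ)).charpoly =
      ∏ i, (Polynomial.X - Polynomial.C ((M i i : ℂ))) := by
    rw [Matrix.charpoly, hM, hcm, Matrix.det_diagonal]
  unfold IsEigen
  rw [hchar]
  simp only [Polynomial.IsRoot, Polynomial.eval_prod, Polynomial.eval_sub, Polynomial.eval_X,
    Polynomial.eval_C, Finset.prod_eq_zero_iff, Finset.mem_univ, true_and, sub_eq_zero]

theorem stmt18 {m n p : ℕ} (A : Matrix (Fin m) (Fin n) ℝ)
    (U₁ V₁ U₂ V₂ : Fin p → Matrix (Fin m) (Fin n) ℝ)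
    (U₁d U₂d : Fin p → Matrix (Fin n) (Fin m) ℝ)
    (E : Fin p → Matrix (Fin n) (Fin n) ℝ)
    (Ad : Matrix (Fin n) (Fin m) ℝ) (hA : IsMP A Ad) (hsemi : EntryNonneg Ad)
    (hAnn : EntryNonneg A)
    (hps1 : ∀ k, ProperSplitting A (U₁ k) (V₁ k)) (hU1 : ∀ k, IsMP (U₁ k) (U₁d k))
    (hps2 : ∀ k, ProperSplitting A (U₂ k) (V₂ k)) (hU2 : ∀ k, IsMP (U₂ k) (U₂d k))
    (hE0 : ∀ k, EntryNonneg (E k)) (hEdiag : ∀ k, ∀ i j, i ≠ j → E k i j = 0)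
    (hEsum : ∑ k, E k = 1)
    (hU1d : ∀ k, EntryNonneg (U₁d k)) (hU1dV : ∀ k, EntryNonneg (U₁d k * V₁ k))
    (hU2d : ∀ k, EntryNonneg (U₂d k)) (hU2dV : ∀ k, EntryNonneg (U₂d k * V₂ k))
    (hrange : ∀ k, LinearMap.range (E k).mulVecLin ≤ LinearMap.range (Aᵀ).mulVecLin)
    (hUle : ∀ k, EntryLE (U₂d k) (U₁d k)) :
    specRad (∑ k, E k * U₁d k * V₁ k) ≤ specRad (∑ k, E k * U₂d k * V₂ k) ∧
    specRad (∑ k, E k * U₂d k * V₂ k) < 1 := by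
  classical
  -- A is injective (full column rank), from `∑ E k = 1` and the range condition.
  have hAinj : ∀ x, A *ᵥ x = 0 → x = 0 := by
    intro x hx
    have hmem : x ∈ LinearMap.range (Aᵀ).mulVecLin := by
      have hx1 : x = ∑ k, (E k) *ᵥ x := by
        rw [← sum_mulVec', hEsum, Matrix.one_mulVec]
      rw [hx1]
      apply Submodule.sum_mem
      intro k _
      exact hrange k ⟨x, by simp [Matrix.mulVecLin_apply]⟩
    obtain ⟨y, hy⟩ := hmem
    have hy' : y ᵥ* A = x := by
      simpa [Matrix.mulVecLin_apply, Matrix.mulVec_transpose] using hy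
    have hzero : x ⬝ᵥ x = 0 := by
      calc x ⬝ᵥ x = (y ᵥ* A) ⬝ᵥ x := by rw [hy']
        _ = y ⬝ᵥ (A *ᵥ x) := (Matrix.dotProduct_mulVec y A x).symm
        _ = 0 := by rw [hx, dotProduct_zero]
    exact dotProduct_self_eq_zero.mp hzero
  -- each Uᵢ k is injective, hence has left inverse Uᵢd k
  have hinj1 : ∀ k, ∀ x, (U₁ k) *ᵥ x = 0 → x = 0 := by
    intro k x hx
    have hker := (hps1 k).2.2
    have hxk : x ∈ LinearMap.ker (U₁ k).mulVecLin := by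
      simp [LinearMap.mem_ker, Matrix.mulVecLin_apply, hx]
    rw [hker] at hxk
    exact hAinj x (by simpa [Matrix.mulVecLin_apply] using hxk)
  have hinj2 : ∀ k, ∀ x, (U₂ k) *ᵥ x = 0 → x = 0 := by
    intro k x hx
    have hker := (hps2 k).2.2
    have hxk : x ∈ LinearMap.ker (U₂ k).mulVecLin := by
      simp [LinearMap.mem_ker, Matrix.mulVecLin_apply, hx]
    rw [hker] at hxk
    exact hAinj x (by simpa [Matrix.mulVecLin_apply] using hxk)
  have hU1inv : ∀ k, U₁d k * U₁ k = 1 := fun k => mp_left_inv (hU1 k).1 (hinj1 k)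
  have hU2inv : ∀ k, U₂d k * U₂ k = 1 := fun k => mp_left_inv (hU2 k).1 (hinj2 k)
  -- projections agree: U₂d k * (A * Ad) = U₂d k
  have hU2AAd : ∀ k, U₂d k * (A * Ad) = U₂d k := by
    intro k
    have hproj : U₂ k * U₂d k = A * Ad := proj_eq hA (hU2 k) (hps2 k).2.1
    calc U₂d k * (A * Ad) = U₂d k * (U₂ k * U₂d k) := by rw [hproj]
      _ = U₂d k * U₂ k * U₂d k := (Matrix.mul_assoc _ _ _).symm
      _ = U₂d k := (hU2 k).2.1
  -- notation
  set H₁ : Matrix (Fin n) (Fin n) ℝ := ∑ k, E k * U₁d k * V₁ k with hH₁def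
  set H₂ : Matrix (Fin n) (Fin n) ℝ := ∑ k, E k * U₂d k * V₂ k with hH₂def
  set B₁ : Matrix (Fin n) (Fin m) ℝ := ∑ k, E k * U₁d k with hB₁def
  set B₂ : Matrix (Fin n) (Fin m) ℝ := ∑ k, E k * U₂d k with hB₂def
  have hBA1 : B₁ * A = 1 - H₁ := multBA (fun k => (hps1 k).1) hU1inv hEsum
  have hBA2 : B₂ * A = 1 - H₂ := multBA (fun k => (hps2 k).1) hU2inv hEsum
  -- entrywise nonnegativity
  have hH1nn : ∀ i j, 0 ≤ H₁ i j := by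
    intro i j
    rw [hH₁def, Matrix.sum_apply]
    refine Finset.sum_nonneg fun k _ => ?_
    rw [Matrix.mul_assoc]
    exact mul_entry_nonneg (hE0 k) (hU1dV k) i j
  have hH2nn : ∀ i j, 0 ≤ H₂ i j := by
    intro i j
    rw [hH₂def, Matrix.sum_apply]
    refine Finset.sum_nonneg fun k _ => ?_
    rw [Matrix.mul_assoc]
    exact mul_entry_nonneg (hE0 k) (hU2dV k) i j
  have hB1nn : ∀ i j, 0 ≤ B₁ i j := by
    intro i j
    rw [hB₁def, Matrix.sum_apply]
    exact Finset.sum_nonneg fun k _ => mul_entry_nonneg (hE0 k) (hU1d k) i j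
  have hB2nn : ∀ i j, 0 ≤ B₂ i j := by
    intro i j
    rw [hB₂def, Matrix.sum_apply]
    exact Finset.sum_nonneg fun k _ => mul_entry_nonneg (hE0 k) (hU2d k) i j
  have hBA1nn : ∀ i j, 0 ≤ (B₁ * A) i j := mul_entry_nonneg hB1nn hAnn
  have hBA2nn : ∀ i j, 0 ≤ (B₂ * A) i j := mul_entry_nonneg hB2nn hAnn
  -- H₁, H₂ are diagonal
  have hoff1 : ∀ i j, i ≠ j → H₁ i j = 0 := by
    intro i j hij
    have h1 : H₁ i j = 0 - (B₁ * A) i j := by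
      have := congrFun (congrFun hBA1 i) j
      rw [Matrix.sub_apply, Matrix.one_apply_ne hij] at this
      linarith
    have := hBA1nn i j
    have := hH1nn i j
    linarith
  have hoff2 : ∀ i j, i ≠ j → H₂ i j = 0 := by
    intro i j hij
    have h1 : H₂ i j = 0 - (B₂ * A) i j := by
      have := congrFun (congrFun hBA2 i) j
      rw [Matrix.sub_apply, Matrix.one_apply_ne hij] at this
      linarith
    have := hBA2nn i j
    have := hH2nn i j
    linarith
  have hBAoff2 : ∀ i j, i ≠ j → (B₂ * A) i j = 0 := by
    intro i j hij
    have h1 : H₂ i j = 0 - (B₂ * A) i j := by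
      have := congrFun (congrFun hBA2 i) j
      rw [Matrix.sub_apply, Matrix.one_apply_ne hij] at this
      linarith
    have := hBA2nn i j
    have := hH2nn i j
    linarith
  -- diagonal values
  have hdiag1 : ∀ i, H₁ i i = 1 - (B₁ * A) i i := by
    intro i
    have := congrFun (congrFun hBA1 i) i
    rw [Matrix.sub_apply, Matrix.one_apply_eq] at this
    linarith
  have hdiag2 : ∀ i, H₂ i i = 1 - (B₂ * A) i i := by
    intro i
    have := congrFun (congrFun hBA2 i) i
    rw [Matrix.sub_apply, Matrix.one_apply_eq] at this
    linarith
  -- strict positivity of the diagonal of B₂ * A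
  have hpos : ∀ i, 0 < (B₂ * A) i i := by
    intro i
    rcases lt_or_eq_of_le (hBA2nn i i) with h | h
    · exact h
    · exfalso
      have hrow : ∀ j, (B₂ * A) i j = 0 := by
        intro j
        by_cases hij : i = j
        · rw [← hij]; exact h.symm
        · exact hBAoff2 i j hij
      have hBproj : B₂ * (A * Ad) = B₂ := by
        rw [hB₂def, Matrix.sum_mul]
        refine Finset.sum_congr rfl fun k _ => ?_
        rw [Matrix.mul_assoc, hU2AAd k]
      have hBrow : ∀ j, B₂ i j = 0 := by
        intro j
        calc B₂ i j = (B₂ * (A * Ad)) i j := by rw [hBproj]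
          _ = ((B₂ * A) * Ad) i j := by rw [Matrix.mul_assoc]
          _ = ∑ l, (B₂ * A) i l * Ad l j := Matrix.mul_apply
          _ = 0 := Finset.sum_eq_zero fun l _ => by rw [hrow l, zero_mul]
      have hterm : ∀ k, ∀ l, (E k * U₂d k) i l = 0 := by
        intro k l
        have hsum0 : ∑ k', (E k' * U₂d k') i l = 0 := by
          have : (∑ k', E k' * U₂d k') i l = ∑ k', (E k' * U₂d k') i l :=
            Matrix.sum_apply _ _ _ _
          rw [← this, ← hB₂def]
          exact hBrow l
        exact (Finset.sum_eq_zero_iff_of_nonneg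
          (fun k' _ => mul_entry_nonneg (hE0 k') (hU2d k') i l)).mp hsum0 k (Finset.mem_univ k)
      have hone : (1 : Matrix (Fin n) (Fin n) ℝ) = ∑ k, (E k * U₂d k) * U₂ k := by
        rw [← hEsum]
        refine Finset.sum_congr rfl fun k _ => ?_
        rw [Matrix.mul_assoc, hU2inv k, Matrix.mul_one]
      have h1 : (1 : ℝ) = (∑ k, (E k * U₂d k) * U₂ k) i i := by
        rw [← hone, Matrix.one_apply_eq]
      rw [Matrix.sum_apply] at h1
      have h2 : ∑ k, ((E k * U₂d k) * U₂ k) i i = 0 := by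
        refine Finset.sum_eq_zero fun k _ => ?_
        rw [Matrix.mul_apply]
        exact Finset.sum_eq_zero fun l _ => by rw [hterm k l, zero_mul]
      rw [h2] at h1
      exact one_ne_zero h1
  -- comparison of diagonals
  have hBle : ∀ i j, B₂ i j ≤ B₁ i j := by
    intro i j
    rw [hB₁def, hB₂def, Matrix.sum_apply, Matrix.sum_apply]
    refine Finset.sum_le_sum fun k _ => ?_
    rw [Matrix.mul_apply, Matrix.mul_apply]
    exact Finset.sum_le_sum fun t _ =>
      mul_le_mul_of_nonneg_left (hUle k t j) (hE0 k i t)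
  have hBAle : ∀ i, (B₂ * A) i i ≤ (B₁ * A) i i := by
    intro i
    rw [Matrix.mul_apply, Matrix.mul_apply]
    exact Finset.sum_le_sum fun l _ =>
      mul_le_mul_of_nonneg_right (hBle i l) (hAnn l i)
  have hdle : ∀ i, H₁ i i ≤ H₂ i i := by
    intro i
    rw [hdiag1 i, hdiag2 i]
    linarith [hBAle i]
  have hd2lt : ∀ i, H₂ i i < 1 := by
    intro i
    rw [hdiag2 i]
    linarith [hpos i]
  -- compute the spectral radii
  have hSet : ∀ (M : Matrix (Fin n) (Fin n) ℝ), (∀ i j, i ≠ j → M i j = 0) →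
      (∀ i, 0 ≤ M i i) →
      {r : ℝ | ∃ μ : ℂ, IsEigen M μ ∧ r = ‖μ‖} = Set.range (fun i => M i i) := by
    intro M hd h0
    ext r
    simp only [Set.mem_setOf_eq, Set.mem_range]
    constructor
    · rintro ⟨μ, hμ, rfl⟩
      obtain ⟨i, rfl⟩ := (isEigen_of_diag hd μ).mp hμ
      exact ⟨i, by rw [Complex.norm_real, Real.norm_eq_abs, abs_of_nonneg (h0 i)]⟩
    · rintro ⟨i, rfl⟩
      exact ⟨(M i i : ℂ), (isEigen_of_diag hd _).mpr ⟨i, rfl⟩,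
        by rw [Complex.norm_real, Real.norm_eq_abs, abs_of_nonneg (h0 i)]⟩
  have hS1 : {r : ℝ | ∃ μ : ℂ, IsEigen H₁ μ ∧ r = ‖μ‖} =
      Set.range (fun i => H₁ i i) := hSet H₁ hoff1 (fun i => hH1nn i i)
  have hS2 : {r : ℝ | ∃ μ : ℂ, IsEigen H₂ μ ∧ r = ‖μ‖} =
      Set.range (fun i => H₂ i i) := hSet H₂ hoff2 (fun i => hH2nn i i)
  have e1 : specRad H₁ = sSup (Set.range (fun i => H₁ i i)) := by
    rw [specRad, hS1]
  have e2 : specRad H₂ = sSup (Set.range (fun i => H₂ i i)) := by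
    rw [specRad, hS2]
  rcases isEmpty_or_nonempty (Fin n) with hemp | hne
  · constructor
    · rw [e1, e2, Set.range_eq_empty, Set.range_eq_empty]
    · rw [e2, Set.range_eq_empty, Real.sSup_empty]
      norm_num
  · constructor
    · rw [e1, e2]
      refine csSup_le (Set.range_nonempty _) ?_
      rintro r ⟨i, rfl⟩
      exact (hdle i).trans (le_csSup ((Set.finite_range _).bddAbove) ⟨i, rfl⟩)
    · rw [e2]
      obtain ⟨i, hi⟩ := Set.Nonempty.csSup_mem (Set.range_nonempty (fun i => H₂ i i))
        (Set.finite_range (fun i => H₂ i i))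
      rw [← hi]
      exact hd2lt i
end

section
/- Let A, B ∈ ℝ^{n×n} be semimonotone matrices with R(A) = R(B) and N(A) = N(B). If A ≥ B entrywise, then B† ≥ A†. -/
open Matrix Polynomial

lemma ext_mulVec {n : ℕ} {M N : Matrix (Fin n) (Fin n) ℝ}
    (h : ∀ x, M.mulVec x = N.mulVec x) : M = N := by
  ext i j
  have := congrFun (h (Pi.single j 1)) i
  simpa [Matrix.mulVec_single] using this

lemma ker_lemma {n : ℕ} {A B Ad : Matrix (Fin n) (Fin n) ℝ}
    (hAA : A * Ad * A = A)
    (hN : LinearMap.ker A.mulVecLin = LinearMap.ker B.mulVecLin) :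
    B * (Ad * A) = B := by
  apply ext_mulVec
  intro x
  set v : Fin n → ℝ := (Ad * A).mulVec x - x with hv
  have hker : v ∈ LinearMap.ker A.mulVecLin := by
    rw [LinearMap.mem_ker]
    show A.mulVec v = 0
    have : A.mulVec ((Ad * A).mulVec x) = A.mulVec x := by
      rw [Matrix.mulVec_mulVec, ← Matrix.mul_assoc, hAA]
    simp [hv, Matrix.mulVec_sub, this]
  rw [hN, LinearMap.mem_ker] at hker
  have : B.mulVec v = 0 := hker
  have h2 : B.mulVec ((Ad * A).mulVec x) = B.mulVec x := by
    have := congrArg (fun w => w + B.mulVec x) this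
    simpa [hv, Matrix.mulVec_sub, sub_add_cancel] using this
  rw [← Matrix.mulVec_mulVec]
  exact h2

lemma range_lemma {n : ℕ} {A B Ad : Matrix (Fin n) (Fin n) ℝ}
    (hAA : A * Ad * A = A)
    (hR : LinearMap.range B.mulVecLin ≤ LinearMap.range A.mulVecLin) :
    (A * Ad) * B = B := by
  apply ext_mulVec
  intro x
  obtain ⟨y, hy⟩ := hR ⟨x, rfl⟩
  have hy' : A.mulVec y = B.mulVec x := hy
  rw [← Matrix.mulVec_mulVec, ← hy', Matrix.mulVec_mulVec, hAA, hy']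

theorem stmt19 {n : ℕ} (A B : Matrix (Fin n) (Fin n) ℝ)
    (Ad Bd : Matrix (Fin n) (Fin n) ℝ)
    (hA : IsMP A Ad) (hB : IsMP B Bd)
    (hAd : EntryNonneg Ad) (hBd : EntryNonneg Bd)
    (hR : LinearMap.range A.mulVecLin = LinearMap.range B.mulVecLin)
    (hN : LinearMap.ker A.mulVecLin = LinearMap.ker B.mulVecLin)
    (hAB : EntryLE B A) :
    EntryLE Ad Bd := by
  obtain ⟨hA1, hA2, hA3, hA4⟩ := hA
  obtain ⟨hB1, hB2, hB3, hB4⟩ := hB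
  -- kernel consequences
  have k1 : B * (Ad * A) = B := ker_lemma hA1 hN
  have k2 : A * (Bd * B) = A := ker_lemma hB1 hN.symm
  -- range consequences
  have r1 : (A * Ad) * B = B := range_lemma hA1 hR.ge
  have r2 : (B * Bd) * A = A := range_lemma hB1 hR.le
  -- P = Ad*A = Bd*B
  have hQP : (Bd * B) * (Ad * A) = Bd * B := by
    rw [Matrix.mul_assoc Bd B, k1]
  have hPQ : (Ad * A) * (Bd * B) = Ad * A := by
    rw [Matrix.mul_assoc Ad A, k2]
  have hPeq : Ad * A = Bd * B := by
    have := congrArg Matrix.transpose hQP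
    rw [Matrix.transpose_mul, hA4, hB4] at this
    rw [← hPQ, this]
  -- S = A*Ad = B*Bd
  have hST : (A * Ad) * (B * Bd) = B * Bd := by
    rw [← Matrix.mul_assoc, r1]
  have hTS : (B * Bd) * (A * Ad) = A * Ad := by
    rw [← Matrix.mul_assoc, r2]
  have hSeq : A * Ad = B * Bd := by
    have := congrArg Matrix.transpose hST
    rw [Matrix.transpose_mul, hA3, hB3] at this
    rw [← hTS, this]
  -- key identity
  have key : Bd * ((A - B) * Ad) = Bd - Ad := by
    have e1 : Bd * (A * Ad) = Bd := by rw [hSeq, ← Matrix.mul_assoc, hB2]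
    have e2 : Bd * (B * Ad) = Ad := by
      rw [← Matrix.mul_assoc, ← hPeq, hA2]
    rw [Matrix.sub_mul, Matrix.mul_sub, e1, e2]
  intro i j
  have h0 : 0 ≤ (Bd * ((A - B) * Ad)) i j := by
    rw [Matrix.mul_apply]
    apply Finset.sum_nonneg
    intro k _
    apply mul_nonneg (hBd i k)
    rw [Matrix.mul_apply]
    apply Finset.sum_nonneg
    intro l _
    exact mul_nonneg (by simpa [Matrix.sub_apply, sub_nonneg] using hAB k l) (hAd l j)
  rw [key] at h0
  have := h0
  rw [Matrix.sub_apply] at this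
  linarith
end
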